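/- Let d ≥ 2, let μ be a probability measure on ℝ whose topological support equals [0,1] and which is symmetric (its pushforward under λ ↦ 1−λ equals μ), and let x, z ∈ ℝ^d be linearly independent. Then every θ in the linear span of {x, z} that minimizes the two-point Mixup loss g over span{x, z} satisfies ⟨θ, x⟩ = −⟨θ, z⟩ and this common value is strictly positive. -/

import Mathlib

open MeasureTheory
open scoped RealInnerProductSpace

/-- The logistic loss `ℓ(u) = log(1 + exp(-u))`. -/
noncomputable def logisticLoss (u : ℝ) : ℝ := Real.log (1 + Real.exp (-u))

/-- The two-point Mixup (logistic) loss for a linear classifier `θ`, where `x` has label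
`+1` and `z` has label `-1`:
`g(θ) = ∫ [λ ℓ(⟪θ, λx+(1-λ)z⟫) + (1-λ) ℓ(-⟪θ, λx+(1-λ)z⟫)] dμ(λ)`. -/
noncomputable def twoPointMixupLoss {d : ℕ} (μ : Measure ℝ)
    (x z θ : EuclideanSpace ℝ (Fin d)) : ℝ :=
  ∫ l, (l * logisticLoss ⟪θ, l • x + (1 - l) • z⟫ +
    (1 - l) * logisticLoss (-⟪θ, l • x + (1 - l) • z⟫)) ∂μ



lemma logisticLoss_neg (s : ℝ) : logisticLoss (-s) = logisticLoss s + s := by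
  unfold logisticLoss
  rw [neg_neg]
  have h1 : (1 : ℝ) + Real.exp s = Real.exp s * (1 + Real.exp (-s)) := by
    rw [mul_add, mul_one, ← Real.exp_add]
    norm_num
    exact add_comm 1 _
  rw [h1, Real.log_mul (Real.exp_ne_zero s) (by positivity), Real.log_exp]
  ring

lemma logisticLoss_continuous : Continuous logisticLoss := by
  have h : Continuous fun u : ℝ => 1 + Real.exp (-u) := by continuity
  unfold logisticLoss
  exact h.log fun u => by positivity

lemma logisticLoss_zero : logisticLoss 0 = Real.log 2 := by
  unfold logisticLoss
  norm_num

lemma logisticLoss_hasDerivAt (u : ℝ) :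
    HasDerivAt logisticLoss (-Real.exp (-u) / (1 + Real.exp (-u))) u := by
  have h1 : HasDerivAt (fun v : ℝ => 1 + Real.exp (-v)) (-Real.exp (-u)) u := by
    simpa using ((Real.hasDerivAt_exp (-u)).comp u (hasDerivAt_neg u)).const_add 1
  exact h1.log (by positivity)

lemma logisticLoss_strictConvexOn : StrictConvexOn ℝ Set.univ logisticLoss := by
  apply StrictMonoOn.strictConvexOn_of_deriv convex_univ logisticLoss_continuous.continuousOn
  rw [interior_univ]
  have hderiv : ∀ u : ℝ, deriv logisticLoss u = -(1 / (Real.exp u + 1)) := by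
    intro u
    rw [(logisticLoss_hasDerivAt u).deriv, Real.exp_neg]
    have h := (Real.exp_pos u).ne'
    field_simp
  intro u _ v _ huv
  rw [hderiv u, hderiv v, neg_lt_neg_iff]
  apply one_div_lt_one_div_of_lt (by positivity)
  have := Real.exp_lt_exp.mpr huv
  linarith

lemma logisticLoss_lower (u : ℝ) : Real.log 2 - u / 2 ≤ logisticLoss u := by
  unfold logisticLoss
  have he : Real.exp (-u) = Real.exp (-u / 2) * Real.exp (-u / 2) := by
    rw [← Real.exp_add]; ring_nf
  have h2 : (2 : ℝ) * Real.exp (-u / 2) ≤ 1 + Real.exp (-u) := by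
    nlinarith [sq_nonneg (1 - Real.exp (-u / 2))]
  have h3 := Real.log_le_log (by positivity) h2
  rw [Real.log_mul two_ne_zero (Real.exp_ne_zero _), Real.log_exp] at h3
  linarith

lemma logisticLoss_upper {u : ℝ} (hu : |u| ≤ 1) :
    logisticLoss u ≤ Real.log 2 - u / 2 + u ^ 2 / 3 := by
  unfold logisticLoss
  have hu2 : u ^ 2 ≤ 1 := by nlinarith [abs_nonneg u, sq_abs u]
  set A := Real.exp (u / 2) with hA
  set B := Real.exp (-u / 2) with hB
  have hApos : 0 < A := Real.exp_pos _
  have hBpos : 0 < B := Real.exp_pos _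
  have hAB : A * B = 1 := by
    rw [hA, hB, ← Real.exp_add]
    have h0 : u / 2 + -u / 2 = 0 := by ring
    rw [h0, Real.exp_zero]
  have hA1 : 1 + u / 2 ≤ A := by
    have := Real.add_one_le_exp (u / 2); linarith
  have hB1 : 1 - u / 2 ≤ B := by
    have := Real.add_one_le_exp (-u / 2); linarith
  have hA1pos : (0:ℝ) < 1 + u / 2 := by nlinarith [abs_le.mp hu]
  have hB1pos : (0:ℝ) < 1 - u / 2 := by nlinarith [abs_le.mp hu]
  have hAup : A ≤ 1 / (1 - u / 2) := by
    rw [le_div_iff₀ hB1pos]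
    nlinarith
  have hBup : B ≤ 1 / (1 + u / 2) := by
    rw [le_div_iff₀ hA1pos]
    nlinarith
  have hsum : A + B ≤ 2 + 2 * u ^ 2 / 3 := by
    have h1 : 1 / (1 - u / 2) + 1 / (1 + u / 2) ≤ 2 + 2 * u ^ 2 / 3 := by
      rw [div_add_div _ _ hB1pos.ne' hA1pos.ne', div_le_iff₀ (by nlinarith)]
      nlinarith
    linarith
  have hkey : 1 + Real.exp (-u) ≤ 2 * Real.exp (-u / 2) * Real.exp (u ^ 2 / 3) := by
    have he : Real.exp (-u) = B * B := by rw [hB, ← Real.exp_add]; ring_nf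
    have h1 : 1 + Real.exp (-u) = B * (A + B) := by
      rw [he]; nlinarith
    have h2 : Real.exp (u ^ 2 / 3) ≥ 1 + u ^ 2 / 3 := by
      have := Real.add_one_le_exp (u ^ 2 / 3); linarith
    rw [h1]
    calc B * (A + B) ≤ B * (2 + 2 * u ^ 2 / 3) := by nlinarith
    _ ≤ 2 * B * (1 + u ^ 2 / 3) := by ring_nf; rfl
    _ ≤ 2 * B * Real.exp (u ^ 2 / 3) := by nlinarith
  calc Real.log (1 + Real.exp (-u)) ≤ Real.log (2 * Real.exp (-u / 2) * Real.exp (u ^ 2 / 3)) :=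
      Real.log_le_log (by positivity) hkey
  _ = Real.log 2 - u / 2 + u ^ 2 / 3 := by
      rw [Real.log_mul (by positivity) (Real.exp_ne_zero _),
        Real.log_mul two_ne_zero (Real.exp_ne_zero _), Real.log_exp, Real.log_exp]
      ring

section Part2

open MeasureTheory
open scoped RealInnerProductSpace

/-- The 2D reduction of the mixup loss. -/
noncomputable def mixG (μ : Measure ℝ) (a b : ℝ) : ℝ :=
  ∫ l, (l * logisticLoss (l * a + (1 - l) * b) +
    (1 - l) * logisticLoss (-(l * a + (1 - l) * b))) ∂μ

lemma mixIntegrand_eq (l s : ℝ) :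
    l * logisticLoss s + (1 - l) * logisticLoss (-s) = logisticLoss s + (1 - l) * s := by
  rw [logisticLoss_neg]; ring

lemma mixIntegrand_continuous (a b : ℝ) :
    Continuous (fun l : ℝ => l * logisticLoss (l * a + (1 - l) * b) +
      (1 - l) * logisticLoss (-(l * a + (1 - l) * b))) := by
  have hs : Continuous (fun l : ℝ => l * a + (1 - l) * b) := by continuity
  exact (continuous_id.mul (logisticLoss_continuous.comp hs)).add
    ((continuous_const.sub continuous_id).mul (logisticLoss_continuous.comp hs.neg))

lemma integrable_of_continuous (μ : Measure ℝ) [IsProbabilityMeasure μ]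
    (hsub : μ (Set.Icc (0 : ℝ) 1)ᶜ = 0) (f : ℝ → ℝ) (hf : Continuous f) :
    Integrable f μ := by
  obtain ⟨C, hC⟩ := (isCompact_Icc (a := (0:ℝ)) (b := 1)).exists_bound_of_continuousOn
    hf.continuousOn
  refine Integrable.mono' (integrable_const C) hf.aestronglyMeasurable ?_
  have hae : ∀ᵐ l ∂μ, l ∈ Set.Icc (0 : ℝ) 1 := by
    rw [ae_iff]
    exact hsub
  filter_upwards [hae] with l hl
  exact hC l hl

lemma integrable_mixIntegrand (μ : Measure ℝ) [IsProbabilityMeasure μ]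
    (hsub : μ (Set.Icc (0 : ℝ) 1)ᶜ = 0) (a b : ℝ) :
    Integrable (fun l : ℝ => l * logisticLoss (l * a + (1 - l) * b) +
      (1 - l) * logisticLoss (-(l * a + (1 - l) * b))) μ :=
  integrable_of_continuous μ hsub _ (mixIntegrand_continuous a b)

lemma mixG_symm (μ : Measure ℝ) (hsym : μ.map (fun l => 1 - l) = μ) (a b : ℝ) :
    mixG μ (-b) (-a) = mixG μ a b := by
  unfold mixG
  have hmap : ∫ l, (l * logisticLoss (l * -b + (1 - l) * -a) +
      (1 - l) * logisticLoss (-(l * -b + (1 - l) * -a))) ∂μ =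
      ∫ l, ((1 - l) * logisticLoss ((1 - l) * -b + (1 - (1 - l)) * -a) +
        (1 - (1 - l)) * logisticLoss (-((1 - l) * -b + (1 - (1 - l)) * -a))) ∂μ := by
    conv_lhs => rw [← hsym]
    rw [integral_map (by fun_prop) ((mixIntegrand_continuous (-b) (-a)).aestronglyMeasurable)]
  rw [hmap]
  apply integral_congr_ae
  apply Filter.Eventually.of_forall
  intro l
  have h1 : (1 - l) * -b + (1 - (1 - l)) * -a = -(l * a + (1 - l) * b) := by ring
  simp only [h1, neg_neg]
  ring

lemma exists_inner_eq {d : ℕ} (x z : EuclideanSpace ℝ (Fin d))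
    (hli : LinearIndependent ℝ ![x, z]) (a b : ℝ) :
    ∃ θ ∈ Submodule.span ℝ ({x, z} : Set (EuclideanSpace ℝ (Fin d))),
      ⟪θ, x⟫ = a ∧ ⟪θ, z⟫ = b := by
  have hpair := LinearIndependent.pair_iff.mp hli
  set A := ⟪x, x⟫ with hA
  set B := ⟪x, z⟫ with hB
  set C := ⟪z, z⟫ with hC'
  have hz : z ≠ 0 := by
    intro h
    rcases hpair 0 1 (by simp [h]) with ⟨_, h1⟩
    norm_num at h1
  have hC : 0 < C := by
    rw [hC', real_inner_self_eq_norm_sq]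
    have := norm_pos_iff.mpr hz
    positivity
  have hdet : 0 < A * C - B * B := by
    have hw : C • x - B • z ≠ 0 := by
      intro h
      have h2 := hpair C (-B) (by rw [neg_smul, ← sub_eq_add_neg]; exact h)
      exact hC.ne' h2.1
    have hw2 : 0 < ⟪C • x - B • z, C • x - B • z⟫ := by
      rw [real_inner_self_eq_norm_sq]
      have := norm_pos_iff.mpr hw
      positivity
    have heq : ⟪C • x - B • z, C • x - B • z⟫ = C * (A * C - B * B) := by
      rw [inner_sub_left, inner_sub_right, inner_sub_right, real_inner_smul_left,
        real_inner_smul_left, real_inner_smul_left, real_inner_smul_left,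
        real_inner_smul_right, real_inner_smul_right, real_inner_smul_right,
        real_inner_smul_right, ← hA, ← hB, ← hC', real_inner_comm x z, ← hB]
      ring
    rw [heq] at hw2
    nlinarith
  refine ⟨((C * a - B * b) / (A * C - B * B)) • x + ((A * b - B * a) / (A * C - B * B)) • z,
    ?_, ?_, ?_⟩
  · exact Submodule.add_mem _
      (Submodule.smul_mem _ _ (Submodule.subset_span (by simp)))
      (Submodule.smul_mem _ _ (Submodule.subset_span (by simp)))
  · rw [inner_add_left, real_inner_smul_left, real_inner_smul_left, ← hA,
      real_inner_comm x z, ← hB]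
    rw [div_mul_eq_mul_div, div_mul_eq_mul_div, ← add_div, div_eq_iff hdet.ne']
    ring
  · rw [inner_add_left, real_inner_smul_left, real_inner_smul_left, ← hB, ← hC']
    rw [div_mul_eq_mul_div, div_mul_eq_mul_div, ← add_div, div_eq_iff hdet.ne']
    ring

end Part2

section Part3

open MeasureTheory
open scoped RealInnerProductSpace

lemma ae_mem_Icc (μ : Measure ℝ) (hsub : μ (Set.Icc (0 : ℝ) 1)ᶜ = 0) :
    ∀ᵐ l ∂μ, l ∈ Set.Icc (0 : ℝ) 1 := by
  rw [ae_iff]; exact hsub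

lemma mixG_strict_mid (μ : Measure ℝ) [IsProbabilityMeasure μ]
    (hsub : μ (Set.Icc (0 : ℝ) 1)ᶜ = 0) {a b : ℝ} (hab : a + b ≠ 0) :
    mixG μ ((a - b) / 2) ((b - a) / 2) < (mixG μ a b + mixG μ (-b) (-a)) / 2 := by
  have hi1 := integrable_mixIntegrand μ hsub a b
  have hi2 := integrable_mixIntegrand μ hsub (-b) (-a)
  have him := integrable_mixIntegrand μ hsub ((a - b) / 2) ((b - a) / 2)
  set gap : ℝ → ℝ := fun l =>
    ((l * logisticLoss (l * a + (1 - l) * b) + (1 - l) * logisticLoss (-(l * a + (1 - l) * b))) +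
     (l * logisticLoss (l * -b + (1 - l) * -a) +
       (1 - l) * logisticLoss (-(l * -b + (1 - l) * -a)))) / 2 -
    (l * logisticLoss (l * ((a - b) / 2) + (1 - l) * ((b - a) / 2)) +
     (1 - l) * logisticLoss (-(l * ((a - b) / 2) + (1 - l) * ((b - a) / 2)))) with hgap
  have hpos : ∀ l, 0 < gap l := by
    intro l
    have e1 := mixIntegrand_eq l (l * a + (1 - l) * b)
    have e2 := mixIntegrand_eq l (l * -b + (1 - l) * -a)
    have em := mixIntegrand_eq l (l * ((a - b) / 2) + (1 - l) * ((b - a) / 2))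
    have hne : l * a + (1 - l) * b ≠ l * -b + (1 - l) * -a := by
      intro h
      apply hab
      nlinarith [h]
    have hconv := logisticLoss_strictConvexOn.2 (Set.mem_univ (l * a + (1 - l) * b))
      (Set.mem_univ (l * -b + (1 - l) * -a)) hne
      (by norm_num : (0:ℝ) < 1/2) (by norm_num : (0:ℝ) < 1/2) (by norm_num)
    simp only [smul_eq_mul] at hconv
    have hsm : (1/2 : ℝ) * (l * a + (1 - l) * b) + 1/2 * (l * -b + (1 - l) * -a)
        = l * ((a - b) / 2) + (1 - l) * ((b - a) / 2) := by ring
    rw [hsm] at hconv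
    simp only [hgap]
    nlinarith [e1, e2, em, hconv]
  have h12 : Integrable (fun l : ℝ =>
      ((l * logisticLoss (l * a + (1 - l) * b) + (1 - l) * logisticLoss (-(l * a + (1 - l) * b))) +
       (l * logisticLoss (l * -b + (1 - l) * -a) +
         (1 - l) * logisticLoss (-(l * -b + (1 - l) * -a)))) / 2) μ :=
    (hi1.add hi2).div_const 2
  have hgi : Integrable gap μ := h12.sub him
  have hintpos : 0 < ∫ l, gap l ∂μ := by
    rw [integral_pos_iff_support_of_nonneg_ae
      (Filter.Eventually.of_forall fun l => (hpos l).le) hgi]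
    have hsupp : Function.support gap = Set.univ :=
      Set.eq_univ_iff_forall.mpr fun l => (hpos l).ne'
    rw [hsupp]
    simp
  have hsplit : ∫ l, gap l ∂μ =
      (mixG μ a b + mixG μ (-b) (-a)) / 2 - mixG μ ((a - b) / 2) ((b - a) / 2) := by
    simp only [hgap]
    rw [integral_sub h12 him, integral_div, integral_add hi1 hi2]
    rfl
  rw [hsplit] at hintpos
  linarith

lemma sq_integral_pos (μ : Measure ℝ) [IsProbabilityMeasure μ]
    (hsub : μ (Set.Icc (0 : ℝ) 1)ᶜ = 0)
    (hfull : ∀ l ∈ Set.Icc (0 : ℝ) 1, ∀ U : Set ℝ, IsOpen U → l ∈ U → μ U ≠ 0) :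
    0 < ∫ l, (2 * l - 1) ^ 2 ∂μ := by
  have hint : Integrable (fun l : ℝ => (2 * l - 1) ^ 2) μ :=
    integrable_of_continuous μ hsub _ (by continuity)
  rw [integral_pos_iff_support_of_nonneg_ae
    (Filter.Eventually.of_forall fun l => sq_nonneg _) hint]
  have hsupset : Set.Iio (1/2 : ℝ) ⊆ Function.support fun l : ℝ => (2 * l - 1) ^ 2 := by
    intro l hl
    simp only [Function.mem_support]
    intro h
    have h2 : 2 * l - 1 = 0 := by
      have := sq_eq_zero_iff.mp h
      exact this
    have h3 : l = 1/2 := by linarith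
    rw [h3] at hl
    simp at hl
  have h0 := hfull 0 (by norm_num) (Set.Iio (1/2)) isOpen_Iio (by norm_num)
  exact lt_of_lt_of_le ((zero_le : (0 : ENNReal) ≤ μ (Set.Iio (1/2))).lt_of_ne (Ne.symm h0)) (measure_mono hsupset)

lemma mixG_lower (μ : Measure ℝ) [IsProbabilityMeasure μ]
    (hsub : μ (Set.Icc (0 : ℝ) 1)ᶜ = 0) {t : ℝ} (ht : t ≤ 0) :
    Real.log 2 ≤ mixG μ t (-t) := by
  have hint := integrable_mixIntegrand μ hsub t (-t)
  have hconst : ∫ _ : ℝ, Real.log 2 ∂μ = Real.log 2 := by simp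
  have hpoint : ∀ l : ℝ, Real.log 2 ≤ l * logisticLoss (l * t + (1 - l) * -t) +
      (1 - l) * logisticLoss (-(l * t + (1 - l) * -t)) := by
    intro l
    rw [mixIntegrand_eq]
    have h1 := logisticLoss_lower (l * t + (1 - l) * -t)
    nlinarith [mul_nonneg (sq_nonneg (2 * l - 1)) (neg_nonneg.mpr ht)]
  calc Real.log 2 = ∫ _ : ℝ, Real.log 2 ∂μ := hconst.symm
  _ ≤ mixG μ t (-t) := integral_mono (integrable_const _) hint hpoint

lemma mixG_upper (μ : Measure ℝ) [IsProbabilityMeasure μ]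
    (hsub : μ (Set.Icc (0 : ℝ) 1)ᶜ = 0) :
    mixG μ (1/2 : ℝ) (-(1/2) : ℝ) ≤ Real.log 2 - (∫ l, (2 * l - 1) ^ 2 ∂μ) / 6 := by
  have hint := integrable_mixIntegrand μ hsub (1/2) (-(1/2))
  have hsq : Integrable (fun l : ℝ => (2 * l - 1) ^ 2) μ :=
    integrable_of_continuous μ hsub _ (by continuity)
  have hc : Integrable (fun l : ℝ => Real.log 2 - (2 * l - 1) ^ 2 / 6) μ :=
    (integrable_const _).sub (hsq.div_const 6)
  have hpoint : (fun l : ℝ => l * logisticLoss (l * (1/2) + (1 - l) * -(1/2)) +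
      (1 - l) * logisticLoss (-(l * (1/2) + (1 - l) * -(1/2)))) ≤ᵐ[μ]
      fun l : ℝ => Real.log 2 - (2 * l - 1) ^ 2 / 6 := by
    filter_upwards [ae_mem_Icc μ hsub] with l hl
    obtain ⟨hl0, hl1⟩ := hl
    have habs : |l * (1/2) + (1 - l) * -(1/2)| ≤ 1 := by
      rw [abs_le]
      constructor <;> nlinarith
    have h1 := logisticLoss_upper habs
    rw [mixIntegrand_eq]
    nlinarith [h1]
  have hmono := integral_mono_ae hint hc hpoint
  have heq : ∫ l, (Real.log 2 - (2 * l - 1) ^ 2 / 6) ∂μ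
      = Real.log 2 - (∫ l, (2 * l - 1) ^ 2 ∂μ) / 6 := by
    rw [integral_sub (integrable_const _) (hsq.div_const 6), integral_div]
    simp
  rw [heq] at hmono
  exact hmono

end Part3

/-- Part I of Theorem 5's proof: for linearly independent `x` (label `+1`) and `z`
(label `-1`) and a symmetric mixing measure with topological support `[0,1]`, every
minimizer of the two-point Mixup loss over `span {x, z}` satisfies
`⟪θ, x⟫ = -⟪θ, z⟫ > 0`. -/
theorem twoPointMixupLoss_minimizer_margin (d : ℕ) (hd : 2 ≤ d)
    (μ : Measure ℝ) [IsProbabilityMeasure μ]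
    (hsupp_sub : μ (Set.Icc (0 : ℝ) 1)ᶜ = 0)
    (hsupp_full : ∀ l ∈ Set.Icc (0 : ℝ) 1, ∀ U : Set ℝ, IsOpen U → l ∈ U → μ U ≠ 0)
    (hsym : μ.map (fun l => 1 - l) = μ)
    (x z : EuclideanSpace ℝ (Fin d)) (hli : LinearIndependent ℝ ![x, z]) :
    ∀ θ ∈ Submodule.span ℝ ({x, z} : Set (EuclideanSpace ℝ (Fin d))),
      (∀ θ' ∈ Submodule.span ℝ ({x, z} : Set (EuclideanSpace ℝ (Fin d))),
        twoPointMixupLoss μ x z θ ≤ twoPointMixupLoss μ x z θ') →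
      ⟪θ, x⟫ = -⟪θ, z⟫ ∧ 0 < ⟪θ, x⟫ := by
  intro θ hθ hmin
  have hcpos := sq_integral_pos μ hsupp_sub hsupp_full
  have hloss : ∀ ψ : EuclideanSpace ℝ (Fin d),
      twoPointMixupLoss μ x z ψ = mixG μ ⟪ψ, x⟫ ⟪ψ, z⟫ := by
    intro ψ
    unfold twoPointMixupLoss mixG
    simp only [inner_add_right, real_inner_smul_right]
  have key : ∀ a' b' : ℝ, mixG μ ⟪θ, x⟫ ⟪θ, z⟫ ≤ mixG μ a' b' := by
    intro a' b'
    obtain ⟨θ', hθ', ha', hb'⟩ := exists_inner_eq x z hli a' b'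
    have h := hmin θ' hθ'
    rwa [hloss θ, hloss θ', ha', hb'] at h
  set a := ⟪θ, x⟫ with ha
  set b := ⟪θ, z⟫ with hb
  have hab : a = -b := by
    by_contra hne
    have hab' : a + b ≠ 0 := fun h => hne (by linarith)
    have h1 := mixG_strict_mid μ hsupp_sub hab'
    rw [mixG_symm μ hsym] at h1
    have h2 := key ((a - b) / 2) ((b - a) / 2)
    linarith
  have hba : b = -a := by rw [hab]; ring
  have hpos : 0 < a := by
    by_contra hle
    push_neg at hle
    have h1 : Real.log 2 ≤ mixG μ a b := by
      rw [hba]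
      exact mixG_lower μ hsupp_sub hle
    have h2 := key (1/2) (-(1/2))
    have h3 := mixG_upper μ hsupp_sub
    linarith
  exact ⟨hab, hpos⟩
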